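/- (Lemma: Lipschitz gradient bound in the attacker block.) In a finite two-player Markov game with discount factor γ ∈ [0,1), initial distribution ρ, reward r : S × A_ν × A_α → [0,1], benign attacker policy π̂_α and ε_π ∈ [0,1], the function J_{ε_π}(ν, α) is differentiable at every point (ν, α) of the product of simplices Δ(A_ν)^{|S|} × Δ(A_α)^{|S|}, and its gradient with respect to the α-block satisfies ‖∇_α J_{ε_π}(ν, α)‖ ≤ ε_π √|A_α| / (1-γ)², where ‖·‖ is the Euclidean norm on ℝ^{S × A_α}. -/

import Mathlib

open scoped BigOperators RealInnerProductSpace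
open Matrix

/-- The state-transition matrix induced by a joint policy. -/
noncomputable def inducedMatrix {S Av Aa : Type*} [Fintype Av] [Fintype Aa]
    (P : S → Av → Aa → S → ℝ) (pinu : S → Av → ℝ) (pialpha : S → Aa → ℝ) :
    Matrix S S ℝ :=
  Matrix.of fun s' s => ∑ av, ∑ aa, pinu s av * pialpha s aa * P s av aa s'

/-- The marginalized reward `r̄_{π_ν,π_α}(s)`. -/
noncomputable def marginalReward {S Av Aa : Type*} [Fintype Av] [Fintype Aa]
    (r : S → Av → Aa → ℝ) (pinu : S → Av → ℝ) (pialpha : S → Aa → ℝ) (s : S) : ℝ :=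
  ∑ av, ∑ aa, pinu s av * pialpha s aa * r s av aa

/-- The objective `J_{ε_π}(ν, α) = V_ρ(π_ν, (1-ε_π)π̂_α + ε_π π_α)` under direct
parameterization, extended near the simplices by the rational formula
`J = ⟨(I - γ P_{π_ν, π_α^mix})⁻¹ ρ, r̄⟩` (the value scaled by `1/(1-γ)` is recovered
as `(1/(1-γ))⟨d, r̄⟩`; here `⟨(I-γP)⁻¹ρ, r̄⟩ = ∑_t γ^t ⟨P^t ρ, r̄⟩` is the value). -/
noncomputable def Jobj {S Av Aa : Type*} [Fintype S] [DecidableEq S]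
    [Fintype Av] [Fintype Aa]
    (P : S → Av → Aa → S → ℝ) (r : S → Av → Aa → ℝ) (γ ε : ℝ)
    (ρ : S → ℝ) (pihat : S → Aa → ℝ)
    (ν : EuclideanSpace ℝ (S × Av)) (α : EuclideanSpace ℝ (S × Aa)) : ℝ :=
  ∑ s, (((1 - γ • inducedMatrix P (fun s a => ν (s, a))
        (fun s a => (1 - ε) * pihat s a + ε * α (s, a)))⁻¹ *ᵥ ρ) s) *
      marginalReward r (fun s a => ν (s, a))
        (fun s a => (1 - ε) * pihat s a + ε * α (s, a)) s

/-- Membership in the product of probability simplices `Δ(A)^{|S|}`, under direct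
parameterization as a Euclidean vector. -/
def inPolicySimplex {S A : Type*} [Fintype A]
    (x : EuclideanSpace ℝ (S × A)) : Prop :=
  (∀ p : S × A, 0 ≤ x p) ∧ ∀ s : S, ∑ a, x (s, a) = 1

section Aux

open scoped NNReal

variable {S Av Aa : Type*} [Fintype S] [DecidableEq S] [Fintype Av] [Fintype Aa]

attribute [local instance] Matrix.linftyOpNormedRing Matrix.linftyOpNormedAlgebra

lemma rowStochFacts {γ : ℝ} (hγ0 : 0 ≤ γ) (hγ1 : γ < 1) (Q : Matrix S S ℝ)
    (h0 : ∀ i j, 0 ≤ Q i j) (h1 : ∀ i, ∑ j, Q i j = γ) :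
    IsUnit (1 - Q) ∧ (∀ i j, 0 ≤ (1 - Q)⁻¹ i j) ∧
      (∀ i, ∑ j, (1 - Q)⁻¹ i j = (1 - γ)⁻¹) := by
  haveI : CompleteSpace (Matrix S S ℝ) := FiniteDimensional.complete ℝ _
  have hQn : ‖Q‖ < 1 := by
    have : ‖Q‖ ≤ γ := by
      rw [Matrix.linfty_opNorm_def]
      rw [show γ = ((Real.toNNReal γ : NNReal) : ℝ) from (Real.coe_toNNReal _ hγ0).symm]
      norm_cast
      refine Finset.sup_le fun i _ => ?_
      have : ((∑ j, ‖Q i j‖₊ : ℝ≥0) : ℝ) = γ := by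
        push_cast
        rw [← h1 i]
        exact Finset.sum_congr rfl fun j _ => abs_of_nonneg (h0 i j)
      rw [← NNReal.coe_le_coe, this, Real.coe_toNNReal _ hγ0]
    linarith
  have hunit : IsUnit (1 - Q) := isUnit_one_sub_of_norm_lt_one hQn
  have hdet : IsUnit (1 - Q).det := (Matrix.isUnit_iff_isUnit_det _).mp hunit
  refine ⟨hunit, ?_, ?_⟩
  · have hinv : (1 - Q)⁻¹ = ∑' n : ℕ, Q ^ n := by
      rw [Matrix.nonsing_inv_eq_ringInverse, ← geom_series_eq_inverse Q hQn]
      rfl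
    intro i j
    rw [hinv]
    have hsum : Summable fun n : ℕ => Q ^ n := summable_geometric_of_norm_lt_one hQn
    let E : Matrix S S ℝ →ₗ[ℝ] ℝ :=
      { toFun := fun M => M i j
        map_add' := fun x y => rfl
        map_smul' := fun c x => rfl }
    have hE : (∑' n : ℕ, Q ^ n) i j = ∑' n : ℕ, (Q ^ n) i j := by
      have := (LinearMap.toContinuousLinearMap E).map_tsum (f := fun n : ℕ => Q ^ n) hsum
      exact this
    rw [hE]
    have hpow : ∀ (n : ℕ) (i j : S), 0 ≤ (Q ^ n) i j := by
      intro n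
      induction n with
      | zero => intro i j; by_cases h : i = j <;> simp [pow_zero, Matrix.one_apply, h]
      | succ n ih =>
        intro i j
        rw [pow_succ, Matrix.mul_apply]
        exact Finset.sum_nonneg fun k _ => mul_nonneg (ih i k) (h0 k j)
    exact tsum_nonneg fun n => hpow n i j
  · intro i
    have h1γ : (1 : ℝ) - γ ≠ 0 := by linarith
    have hmv : (1 - Q) *ᵥ (fun _ => (1 - γ)⁻¹) = fun _ => 1 := by
      funext k
      simp only [Matrix.mulVec, dotProduct]
      rw [← Finset.sum_mul]
      have : ∑ j, (1 - Q) k j = 1 - γ := by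
        simp [Matrix.sub_apply, Matrix.one_apply, Finset.sum_sub_distrib, h1 k]
      rw [this]
      field_simp
    have key : (1 - Q)⁻¹ *ᵥ (fun _ => (1 : ℝ)) = fun _ => (1 - γ)⁻¹ := by
      rw [← hmv, Matrix.mulVec_mulVec, Matrix.nonsing_inv_mul _ hdet, Matrix.one_mulVec]
    have := congrFun key i
    simpa [Matrix.mulVec, dotProduct] using this

/-- decomposition of the induced matrix as a linear combination of constant matrices -/
lemma inducedMatrix_eq_sum (P : S → Av → Aa → S → ℝ) (pinu : S → Av → ℝ)
    (pia : S → Aa → ℝ) :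
    inducedMatrix P pinu pia = ∑ s : S, ∑ av : Av, ∑ aa : Aa,
      (pinu s av * pia s aa) • Matrix.of (fun s' t => if t = s then P s av aa s' else 0) := by
  ext s' t
  simp only [inducedMatrix, Matrix.of_apply, Matrix.sum_apply, Matrix.smul_apply,
    smul_eq_mul, mul_ite, mul_zero]
  symm
  rw [Finset.sum_eq_single t]
  · simp
  · intro b _ hb
    simp [Ne.symm hb]
  · intro h
    exact absurd (Finset.mem_univ t) h

/-- evaluation of `M *ᵥ ρ` at `s`, as a continuous linear map in `M`. -/
noncomputable def evalMulVecCLM (ρ : S → ℝ) (s : S) : Matrix S S ℝ →L[ℝ] ℝ :=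
  LinearMap.toContinuousLinearMap
    { toFun := fun M => (M *ᵥ ρ) s
      map_add' := fun x y => by simp [Matrix.add_mulVec]
      map_smul' := fun c x => by simp [Matrix.smul_mulVec] }

@[simp] lemma evalMulVecCLM_apply (ρ : S → ℝ) (s : S) (M : Matrix S S ℝ) :
    evalMulVecCLM ρ s M = (M *ᵥ ρ) s := rfl

/-- the linear part of the affine map `β ↦ 1 - γ • inducedMatrix P ν (mix β)`. -/
noncomputable def matCLM (P : S → Av → Aa → S → ℝ) (pinu : S → Av → ℝ) (γ ε : ℝ) :
    EuclideanSpace ℝ (S × Aa) →L[ℝ] Matrix S S ℝ :=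
  LinearMap.toContinuousLinearMap
    { toFun := fun v => (-(γ * ε)) • inducedMatrix P pinu (fun s a => v (s, a))
      map_add' := fun x y => by
        ext s' t
        simp only [inducedMatrix, Matrix.smul_apply, Matrix.of_apply, Matrix.add_apply,
          smul_eq_mul]
        simp only [PiLp.add_apply, mul_add, add_mul, Finset.sum_add_distrib]
      map_smul' := fun c x => by
        ext s' t
        simp only [inducedMatrix, Matrix.smul_apply, Matrix.of_apply, smul_eq_mul,
          RingHom.id_apply]
        simp only [PiLp.smul_apply, smul_eq_mul, RingHom.id_apply, Finset.mul_sum]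
        refine Finset.sum_congr rfl fun av _ => Finset.sum_congr rfl fun aa _ => by ring }

@[simp] lemma matCLM_apply (P : S → Av → Aa → S → ℝ) (pinu : S → Av → ℝ) (γ ε : ℝ)
    (v : EuclideanSpace ℝ (S × Aa)) :
    matCLM P pinu γ ε v = (-(γ * ε)) • inducedMatrix P pinu (fun s a => v (s, a)) := rfl

/-- the linear part of the affine map `β ↦ marginalReward r ν (mix β) s`. -/
noncomputable def rewCLM (r : S → Av → Aa → ℝ) (pinu : S → Av → ℝ) (ε : ℝ) (s : S) :
    EuclideanSpace ℝ (S × Aa) →L[ℝ] ℝ :=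
  LinearMap.toContinuousLinearMap
    { toFun := fun v => ε * ∑ av, ∑ aa, pinu s av * v (s, aa) * r s av aa
      map_add' := fun x y => by
        simp only [PiLp.add_apply, mul_add, add_mul, Finset.sum_add_distrib]
      map_smul' := fun c x => by
        simp only [PiLp.smul_apply, smul_eq_mul, RingHom.id_apply, Finset.mul_sum]
        refine Finset.sum_congr rfl fun av _ => Finset.sum_congr rfl fun aa _ => by ring }

@[simp] lemma rewCLM_apply (r : S → Av → Aa → ℝ) (pinu : S → Av → ℝ) (ε : ℝ) (s : S)
    (v : EuclideanSpace ℝ (S × Aa)) :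
    rewCLM r pinu ε s v = ε * ∑ av, ∑ aa, pinu s av * v (s, aa) * r s av aa := rfl

end Aux

section Main

attribute [local instance] Matrix.linftyOpNormedRing Matrix.linftyOpNormedAlgebra

set_option maxHeartbeats 1000000

/-- Lipschitz gradient bound in the attacker block:
`J_{ε_π}` is differentiable at every point of the product of simplices and
`‖∇_α J_{ε_π}(ν, α)‖ ≤ ε_π √|A_α| / (1-γ)²`. -/
theorem attacker_gradient_bound {S Av Aa : Type*}
    [Fintype S] [Nonempty S] [DecidableEq S]
    [Fintype Av] [Nonempty Av] [Fintype Aa] [Nonempty Aa]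
    (P : S → Av → Aa → S → ℝ)
    (hP0 : ∀ s av aa s', 0 ≤ P s av aa s')
    (hP1 : ∀ s av aa, ∑ s', P s av aa s' = 1)
    (r : S → Av → Aa → ℝ)
    (hr0 : ∀ s av aa, 0 ≤ r s av aa) (hr1 : ∀ s av aa, r s av aa ≤ 1)
    (γ : ℝ) (hγ0 : 0 ≤ γ) (hγ1 : γ < 1)
    (ρ : S → ℝ) (hρ0 : ∀ s, 0 ≤ ρ s) (hρ1 : ∑ s, ρ s = 1)
    (pihat : S → Aa → ℝ)
    (hpihat0 : ∀ s a, 0 ≤ pihat s a) (hpihat1 : ∀ s, ∑ a, pihat s a = 1)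
    (ε : ℝ) (hε0 : 0 ≤ ε) (hε1 : ε ≤ 1)
    (ν : EuclideanSpace ℝ (S × Av)) (α : EuclideanSpace ℝ (S × Aa))
    (hν : inPolicySimplex ν) (hα : inPolicySimplex α) :
    DifferentiableAt ℝ
        (fun pr : EuclideanSpace ℝ (S × Av) × EuclideanSpace ℝ (S × Aa) =>
          Jobj P r γ ε ρ pihat pr.1 pr.2) (ν, α) ∧
      ‖gradient (fun α' => Jobj P r γ ε ρ pihat ν α') α‖ ≤
        ε * Real.sqrt (Fintype.card Aa) / (1 - γ) ^ 2 := by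
  classical
  obtain ⟨hν0, hν1⟩ := hν
  obtain ⟨hα0, hα1⟩ := hα
  haveI : CompleteSpace (Matrix S S ℝ) := FiniteDimensional.complete ℝ _
  have h1γ : (0 : ℝ) < 1 - γ := by linarith
  have h1γ' : (1 : ℝ) - γ ≠ 0 := ne_of_gt h1γ
  set ν' : S → Av → ℝ := fun s a => ν (s, a) with hν'def
  set mixα : S → Aa → ℝ := fun s a => (1 - ε) * pihat s a + ε * α (s, a) with hmixdef
  have hmix0 : ∀ s a, 0 ≤ mixα s a := fun s a =>
    add_nonneg (mul_nonneg (by linarith) (hpihat0 s a)) (mul_nonneg hε0 (hα0 (s, a)))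
  have hmix1 : ∀ s, ∑ a, mixα s a = 1 := by
    intro s
    simp only [hmixdef]
    rw [Finset.sum_add_distrib, ← Finset.mul_sum, ← Finset.mul_sum, hpihat1 s, hα1 s]
    ring
  set Pm : Matrix S S ℝ := inducedMatrix P ν' mixα with hPmdef
  have hPm0 : ∀ i j, 0 ≤ Pm i j := fun i j =>
    Finset.sum_nonneg fun av _ => Finset.sum_nonneg fun aa _ =>
      mul_nonneg (mul_nonneg (hν0 (j, av)) (hmix0 j aa)) (hP0 j av aa i)
  have hPm1 : ∀ j, ∑ i, Pm i j = 1 := by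
    intro j
    rw [show ∑ i, Pm i j = ∑ i, ∑ av, ∑ aa, ν' j av * mixα j aa * P j av aa i from rfl]
    rw [Finset.sum_comm]
    have : ∀ av, ∑ i : S, ∑ aa, ν' j av * mixα j aa * P j av aa i
        = ν' j av := by
      intro av
      rw [Finset.sum_comm]
      have : ∀ aa, ∑ i : S, ν' j av * mixα j aa * P j av aa i
          = ν' j av * mixα j aa := by
        intro aa
        rw [← Finset.mul_sum, hP1 j av aa, mul_one]
      rw [Finset.sum_congr rfl fun aa _ => this aa, ← Finset.mul_sum, hmix1 j, mul_one]
    rw [Finset.sum_congr rfl fun av _ => this av]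
    exact hν1 j
  set A : Matrix S S ℝ := 1 - γ • Pm with hAdef
  obtain ⟨hTunit, hTinv0, hTsum⟩ := rowStochFacts hγ0 hγ1 (γ • Pmᵀ)
    (fun i j => mul_nonneg hγ0 (hPm0 j i))
    (fun i => by
      simp only [Matrix.smul_apply, smul_eq_mul]
      rw [← Finset.mul_sum, show ∑ j, Pmᵀ i j = 1 from hPm1 i, mul_one])
  have hATeq : (1 : Matrix S S ℝ) - γ • Pmᵀ = Aᵀ := by
    rw [hAdef, Matrix.transpose_sub, Matrix.transpose_smul, Matrix.transpose_one]
  rw [hATeq] at hTunit hTinv0 hTsum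
  have hAunit : IsUnit A := by
    rw [Matrix.isUnit_iff_isUnit_det, ← Matrix.det_transpose]
    exact (Matrix.isUnit_iff_isUnit_det _).mp hTunit
  have hAdet : IsUnit A.det := (Matrix.isUnit_iff_isUnit_det _).mp hAunit
  have hAinvT : ∀ i j, A⁻¹ i j = Aᵀ⁻¹ j i := by
    intro i j
    rw [← Matrix.transpose_nonsing_inv]
    rfl
  have hAinv0 : ∀ i j, 0 ≤ A⁻¹ i j := fun i j => (hAinvT i j) ▸ hTinv0 j i
  have hAcolsum : ∀ j, ∑ i, A⁻¹ i j = (1 - γ)⁻¹ := by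
    intro j
    rw [Finset.sum_congr rfl fun i _ => hAinvT i j]
    exact hTsum j
  set d : S → ℝ := A⁻¹ *ᵥ ρ with hddef
  have hd0 : ∀ s, 0 ≤ d s := fun s =>
    Finset.sum_nonneg fun t _ => mul_nonneg (hAinv0 s t) (hρ0 t)
  have hdsum : ∑ s, d s = (1 - γ)⁻¹ := by
    rw [show ∑ s, d s = ∑ s, ∑ t, A⁻¹ s t * ρ t from rfl, Finset.sum_comm]
    have : ∀ t, ∑ s : S, A⁻¹ s t * ρ t = (1 - γ)⁻¹ * ρ t := by
      intro t
      rw [← Finset.sum_mul, hAcolsum t]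
    rw [Finset.sum_congr rfl fun t _ => this t, ← Finset.mul_sum, hρ1, mul_one]
  set rb : S → ℝ := marginalReward r ν' mixα with hrbdef
  have hrb0 : ∀ s, 0 ≤ rb s := fun s =>
    Finset.sum_nonneg fun av _ => Finset.sum_nonneg fun aa _ =>
      mul_nonneg (mul_nonneg (hν0 (s, av)) (hmix0 s aa)) (hr0 s av aa)
  have hrb1 : ∀ s, rb s ≤ 1 := by
    intro s
    have : rb s ≤ ∑ av, ∑ aa, ν' s av * mixα s aa * 1 := by
      refine Finset.sum_le_sum fun av _ => Finset.sum_le_sum fun aa _ => ?_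
      exact mul_le_mul_of_nonneg_left (hr1 s av aa)
        (mul_nonneg (hν0 (s, av)) (hmix0 s aa))
    refine le_trans this (le_of_eq ?_)
    simp only [mul_one]
    rw [Finset.sum_congr rfl fun av (_ : av ∈ Finset.univ) =>
      (by rw [← Finset.mul_sum, hmix1 s, mul_one] :
        ∑ aa, ν' s av * mixα s aa = ν' s av)]
    exact hν1 s
  set w : S → ℝ := Aᵀ⁻¹ *ᵥ rb with hwdef
  have hw0 : ∀ s, 0 ≤ w s := fun s =>
    Finset.sum_nonneg fun t _ => mul_nonneg (hTinv0 s t) (hrb0 t)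
  have hw1 : ∀ s, w s ≤ (1 - γ)⁻¹ := by
    intro s
    have : w s ≤ ∑ t, Aᵀ⁻¹ s t * 1 := by
      refine Finset.sum_le_sum fun t _ => ?_
      exact mul_le_mul_of_nonneg_left (hrb1 t) (hTinv0 s t)
    simpa [hTsum s] using this
  have hu : (hAunit.unit : Matrix S S ℝ) = A := hAunit.unit_spec
  have huinv : ((hAunit.unit⁻¹ : (Matrix S S ℝ)ˣ) : Matrix S S ℝ) = A⁻¹ := by
    rw [Matrix.coe_units_inv, hu]
  constructor
  · have hfun : (fun pr : EuclideanSpace ℝ (S × Av) × EuclideanSpace ℝ (S × Aa) =>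
          Jobj P r γ ε ρ pihat pr.1 pr.2)
        = fun pr : EuclideanSpace ℝ (S × Av) × EuclideanSpace ℝ (S × Aa) =>
            ∑ s, (Ring.inverse ((1 : Matrix S S ℝ) -
                γ • inducedMatrix P (fun s a => pr.1 (s, a))
                  (fun s a => (1 - ε) * pihat s a + ε * pr.2 (s, a))) *ᵥ ρ) s *
              (∑ av, ∑ aa, pr.1 (s, av) * ((1 - ε) * pihat s aa + ε * pr.2 (s, aa)) *
                r s av aa) := by
      funext pr
      simp [Jobj, marginalReward, Matrix.nonsing_inv_eq_ringInverse]
    rw [hfun]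
    have hcoord1 : ∀ p : S × Av, DifferentiableAt ℝ
        (fun pr : EuclideanSpace ℝ (S × Av) × EuclideanSpace ℝ (S × Aa) => pr.1 p) (ν, α) :=
      fun p => ((EuclideanSpace.proj p : EuclideanSpace ℝ (S × Av) →L[ℝ] ℝ)).differentiableAt.comp
        (ν, α) differentiableAt_fst
    have hcoord2 : ∀ p : S × Aa, DifferentiableAt ℝ
        (fun pr : EuclideanSpace ℝ (S × Av) × EuclideanSpace ℝ (S × Aa) => pr.2 p) (ν, α) :=
      fun p => ((EuclideanSpace.proj p : EuclideanSpace ℝ (S × Aa) →L[ℝ] ℝ)).differentiableAt.comp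
        (ν, α) differentiableAt_snd
    apply DifferentiableAt.fun_sum
    intro s _
    apply DifferentiableAt.mul
    · have hNdiff : DifferentiableAt ℝ
          (fun pr : EuclideanSpace ℝ (S × Av) × EuclideanSpace ℝ (S × Aa) =>
            (1 : Matrix S S ℝ) - γ • inducedMatrix P (fun s a => pr.1 (s, a))
              (fun s a => (1 - ε) * pihat s a + ε * pr.2 (s, a))) (ν, α) := by
        simp only [inducedMatrix_eq_sum]
        refine DifferentiableAt.sub (differentiableAt_const _) ?_
        refine DifferentiableAt.const_smul ?_ γ
        refine DifferentiableAt.fun_sum fun t _ => ?_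
        refine DifferentiableAt.fun_sum fun av _ => ?_
        refine DifferentiableAt.fun_sum fun aa _ => ?_
        exact ((hcoord1 (t, av)).mul ((differentiableAt_const _).add
          ((hcoord2 (t, aa)).const_mul ε))).smul_const _
      have hinvdiff := DifferentiableAt.comp (ν, α)
        (differentiableAt_inverse (𝕜 := ℝ) hAunit) hNdiff
      exact ((evalMulVecCLM ρ s).differentiableAt).comp _ hinvdiff
    · refine DifferentiableAt.fun_sum fun av _ => ?_
      refine DifferentiableAt.fun_sum fun aa _ => ?_
      exact ((hcoord1 (s, av)).mul ((differentiableAt_const _).add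
        ((hcoord2 (s, aa)).const_mul ε))).mul_const _
  · -- gradient bound
    have hRinv : Ring.inverse A = A⁻¹ := (Matrix.nonsing_inv_eq_ringInverse A).symm
    -- affine structure of the matrix-valued map
    have haff : ∀ β : EuclideanSpace ℝ (S × Aa),
        (1 : Matrix S S ℝ) - γ • inducedMatrix P ν'
            (fun s a => (1 - ε) * pihat s a + ε * β (s, a))
          = (A - matCLM P ν' γ ε α) + matCLM P ν' γ ε β := by
      intro β
      ext i j
      simp only [matCLM_apply, Matrix.add_apply, Matrix.sub_apply, Matrix.smul_apply,
        Matrix.one_apply, hAdef, hPmdef, inducedMatrix, Matrix.of_apply, smul_eq_mul]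
      have hsum : (∑ av, ∑ aa, ν' j av * ((1 - ε) * pihat j aa + ε * β (j, aa)) * P j av aa i)
          = (∑ av, ∑ aa, ν' j av * mixα j aa * P j av aa i)
            + (ε * ∑ av, ∑ aa, ν' j av * β (j, aa) * P j av aa i
              - ε * ∑ av, ∑ aa, ν' j av * α (j, aa) * P j av aa i) := by
        simp only [hmixdef, Finset.mul_sum, ← Finset.sum_add_distrib,
          ← Finset.sum_sub_distrib]
        refine Finset.sum_congr rfl fun av _ => Finset.sum_congr rfl fun aa _ => by ring
      rw [hsum]
      ring
    have hNder : HasFDerivAt (fun β : EuclideanSpace ℝ (S × Aa) =>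
        (1 : Matrix S S ℝ) - γ • inducedMatrix P ν'
          (fun s a => (1 - ε) * pihat s a + ε * β (s, a)))
        (matCLM P ν' γ ε) α := by
      have h2 : HasFDerivAt (fun β : EuclideanSpace ℝ (S × Aa) =>
          (A - matCLM P ν' γ ε α) + matCLM P ν' γ ε β) (matCLM P ν' γ ε) α :=
        (matCLM P ν' γ ε).hasFDerivAt.const_add _
      exact h2.congr_of_eventuallyEq (Filter.Eventually.of_forall haff)
    have hDinv : HasFDerivAt (Ring.inverse : Matrix S S ℝ → Matrix S S ℝ)
        (-(ContinuousLinearMap.mulLeftRight ℝ (Matrix S S ℝ) A⁻¹ A⁻¹)) A := by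
      have h := hasFDerivAt_ringInverse (𝕜 := ℝ) hAunit.unit
      rw [hu, huinv] at h
      exact h
    have hgder : ∀ s : S, HasFDerivAt (fun β : EuclideanSpace ℝ (S × Aa) =>
        (Ring.inverse ((1 : Matrix S S ℝ) - γ • inducedMatrix P ν'
          (fun s a => (1 - ε) * pihat s a + ε * β (s, a))) *ᵥ ρ) s)
        ((evalMulVecCLM ρ s).comp
          ((-(ContinuousLinearMap.mulLeftRight ℝ (Matrix S S ℝ) A⁻¹ A⁻¹)).comp
            (matCLM P ν' γ ε))) α :=
      fun s => by
        have h := (evalMulVecCLM ρ s).hasFDerivAt.comp α (hDinv.comp α hNder)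
        exact h
    have haffR : ∀ (s : S) (β : EuclideanSpace ℝ (S × Aa)),
        marginalReward r ν' (fun s a => (1 - ε) * pihat s a + ε * β (s, a)) s
          = (rb s - rewCLM r ν' ε s α) + rewCLM r ν' ε s β := by
      intro s β
      simp only [marginalReward, rewCLM_apply, hrbdef, hmixdef]
      simp only [Finset.mul_sum, ← Finset.sum_add_distrib, ← Finset.sum_sub_distrib]
      refine Finset.sum_congr rfl fun av _ => Finset.sum_congr rfl fun aa _ => by ring
    have hhder : ∀ s : S, HasFDerivAt (fun β : EuclideanSpace ℝ (S × Aa) =>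
        marginalReward r ν' (fun s a => (1 - ε) * pihat s a + ε * β (s, a)) s)
        (rewCLM r ν' ε s) α := by
      intro s
      have h2 : HasFDerivAt (fun β : EuclideanSpace ℝ (S × Aa) =>
          (rb s - rewCLM r ν' ε s α) + rewCLM r ν' ε s β) (rewCLM r ν' ε s) α :=
        (rewCLM r ν' ε s).hasFDerivAt.const_add _
      exact h2.congr_of_eventuallyEq (Filter.Eventually.of_forall (haffR s))
    have hmul : ∀ s : S, HasFDerivAt (fun β : EuclideanSpace ℝ (S × Aa) =>
        (Ring.inverse ((1 : Matrix S S ℝ) - γ • inducedMatrix P ν'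
          (fun s a => (1 - ε) * pihat s a + ε * β (s, a))) *ᵥ ρ) s *
          marginalReward r ν' (fun s a => (1 - ε) * pihat s a + ε * β (s, a)) s)
        (d s • rewCLM r ν' ε s + rb s • ((evalMulVecCLM ρ s).comp
          ((-(ContinuousLinearMap.mulLeftRight ℝ (Matrix S S ℝ) A⁻¹ A⁻¹)).comp
            (matCLM P ν' γ ε)))) α := by
      intro s
      have := (hgder s).mul (hhder s)
      have hds : (Ring.inverse ((1 : Matrix S S ℝ) - γ • inducedMatrix P ν'
          (fun s a => (1 - ε) * pihat s a + ε * α (s, a))) *ᵥ ρ) s = d s := by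
        rw [hddef]
        congr 1
      rw [hds] at this
      exact this
    set L : EuclideanSpace ℝ (S × Aa) →L[ℝ] ℝ :=
      ∑ s : S, (d s • rewCLM r ν' ε s + rb s • ((evalMulVecCLM ρ s).comp
        ((-(ContinuousLinearMap.mulLeftRight ℝ (Matrix S S ℝ) A⁻¹ A⁻¹)).comp
          (matCLM P ν' γ ε)))) with hLdef
    have hJ : HasFDerivAt (fun α' => Jobj P r γ ε ρ pihat ν α') L α := by
      have hsum' : HasFDerivAt (fun β : EuclideanSpace ℝ (S × Aa) =>
          ∑ s, (Ring.inverse ((1 : Matrix S S ℝ) - γ • inducedMatrix P ν'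
            (fun s a => (1 - ε) * pihat s a + ε * β (s, a))) *ᵥ ρ) s *
            marginalReward r ν' (fun s a => (1 - ε) * pihat s a + ε * β (s, a)) s) L α :=
        HasFDerivAt.fun_sum fun s _ => hmul s
      refine hsum'.congr_of_eventuallyEq (Filter.Eventually.of_forall fun β => ?_)
      simp only [Jobj, Matrix.nonsing_inv_eq_ringInverse]
      rfl
    -- reduce to operator norm of L
    have hgradL : ‖gradient (fun α' => Jobj P r γ ε ρ pihat ν α') α‖ = ‖L‖ := by
      have hfd : fderiv ℝ (fun α' => Jobj P r γ ε ρ pihat ν α') α = L := hJ.fderiv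
      show ‖(InnerProductSpace.toDual ℝ (EuclideanSpace ℝ (S × Aa))).symm
        (fderiv ℝ (fun α' => Jobj P r γ ε ρ pihat ν α') α)‖ = ‖L‖
      rw [hfd, LinearIsometryEquiv.norm_map]
    rw [hgradL]
    have hC0 : 0 ≤ ε * Real.sqrt (Fintype.card Aa) / (1 - γ) ^ 2 := by positivity
    refine ContinuousLinearMap.opNorm_le_bound _ hC0 fun v => ?_
    have hmv : ∀ (M : Matrix S S ℝ) (y : S → ℝ) (s : S), (M *ᵥ y) s = ∑ t, M s t * y t :=
      fun M y s => rfl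
    have hLv : L v = (∑ s, d s * (ε * ∑ av, ∑ aa, ν' s av * v (s, aa) * r s av aa))
        + ∑ s, rb s * ((γ * ε) *
            (A⁻¹ *ᵥ (inducedMatrix P ν' (fun p q => v (p, q)) *ᵥ d)) s) := by
      rw [hLdef]
      simp only [ContinuousLinearMap.sum_apply, ContinuousLinearMap.add_apply,
        ContinuousLinearMap.coe_smul', Pi.smul_apply, ContinuousLinearMap.comp_apply,
        ContinuousLinearMap.coe_comp', Function.comp_apply,
        ContinuousLinearMap.neg_apply, ContinuousLinearMap.mulLeftRight_apply,
        evalMulVecCLM_apply, matCLM_apply, rewCLM_apply, smul_eq_mul]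
      rw [Finset.sum_add_distrib]
      congr 1
      refine Finset.sum_congr rfl fun s _ => ?_
      congr 1
      have hmat : -(A⁻¹ * ((-(γ * ε)) • inducedMatrix P ν' (fun p q => v (p, q))) * A⁻¹)
          = (γ * ε) • (A⁻¹ * (inducedMatrix P ν' (fun p q => v (p, q)) * A⁻¹)) := by
        rw [Matrix.mul_smul, Matrix.smul_mul, Matrix.mul_assoc]
        simp
      show (-(A⁻¹ * ((-(γ * ε)) • inducedMatrix P ν' (fun p q => v (p, q))) * A⁻¹) *ᵥ ρ) s = _
      rw [hmat, Matrix.smul_mulVec, Pi.smul_apply, smul_eq_mul]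
      congr 1
      rw [← Matrix.mulVec_mulVec, ← Matrix.mulVec_mulVec]
    have hva0 : ∀ (s : S) (aa : Aa), (0 : ℝ) ≤ |v (s, aa)| := fun s aa => abs_nonneg _
    set X : ℝ := ∑ s, d s * ∑ aa, |v (s, aa)| with hXdef
    have hX0 : 0 ≤ X :=
      Finset.sum_nonneg fun s _ => mul_nonneg (hd0 s)
        (Finset.sum_nonneg fun aa _ => hva0 s aa)
    have hsub : ∀ s, ∑ av, ∑ aa, ν' s av * |v (s, aa)| = ∑ aa, |v (s, aa)| := by
      intro s
      rw [Finset.sum_comm]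
      refine Finset.sum_congr rfl fun aa _ => ?_
      rw [← Finset.sum_mul, hν1 s, one_mul]
    -- bound for the reward term
    have hW : ∀ s, |∑ av, ∑ aa, ν' s av * v (s, aa) * r s av aa| ≤ ∑ aa, |v (s, aa)| := by
      intro s
      calc |∑ av, ∑ aa, ν' s av * v (s, aa) * r s av aa|
          ≤ ∑ av, |∑ aa, ν' s av * v (s, aa) * r s av aa| := Finset.abs_sum_le_sum_abs _ _
        _ ≤ ∑ av, ∑ aa, |ν' s av * v (s, aa) * r s av aa| :=
            Finset.sum_le_sum fun av _ => Finset.abs_sum_le_sum_abs _ _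
        _ ≤ ∑ av, ∑ aa, ν' s av * |v (s, aa)| := by
            refine Finset.sum_le_sum fun av _ => Finset.sum_le_sum fun aa _ => ?_
            rw [abs_mul, abs_mul, abs_of_nonneg (hν0 (s, av))]
            have hrabs : |r s av aa| ≤ 1 :=
              abs_le.mpr ⟨by linarith [hr0 s av aa], hr1 s av aa⟩
            calc ν' s av * |v (s, aa)| * |r s av aa|
                ≤ ν' s av * |v (s, aa)| * 1 :=
                  mul_le_mul_of_nonneg_left hrabs (mul_nonneg (hν0 _) (abs_nonneg _))
              _ = ν' s av * |v (s, aa)| := mul_one _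
        _ = ∑ aa, |v (s, aa)| := hsub s
    have hT2 : |∑ s, d s * (ε * ∑ av, ∑ aa, ν' s av * v (s, aa) * r s av aa)| ≤ ε * X := by
      calc |∑ s, d s * (ε * ∑ av, ∑ aa, ν' s av * v (s, aa) * r s av aa)|
          ≤ ∑ s, |d s * (ε * ∑ av, ∑ aa, ν' s av * v (s, aa) * r s av aa)| :=
            Finset.abs_sum_le_sum_abs _ _
        _ ≤ ∑ s, d s * (ε * ∑ aa, |v (s, aa)|) := by
            refine Finset.sum_le_sum fun s _ => ?_
            rw [abs_mul, abs_of_nonneg (hd0 s), abs_mul, abs_of_nonneg hε0]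
            exact mul_le_mul_of_nonneg_left
              (mul_le_mul_of_nonneg_left (hW s) hε0) (hd0 s)
        _ = ε * X := by
            rw [hXdef, Finset.mul_sum]
            exact Finset.sum_congr rfl fun s _ => by ring
    -- bound for the transition term
    have hMvabs : ∀ t s, |(inducedMatrix P ν' (fun p q => v (p, q))) t s|
        ≤ ∑ av, ∑ aa, ν' s av * |v (s, aa)| * P s av aa t := by
      intro t s
      calc |(inducedMatrix P ν' (fun p q => v (p, q))) t s|
          ≤ ∑ av, |∑ aa, ν' s av * v (s, aa) * P s av aa t| := Finset.abs_sum_le_sum_abs _ _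
        _ ≤ ∑ av, ∑ aa, |ν' s av * v (s, aa) * P s av aa t| :=
            Finset.sum_le_sum fun av _ => Finset.abs_sum_le_sum_abs _ _
        _ ≤ ∑ av, ∑ aa, ν' s av * |v (s, aa)| * P s av aa t := by
            refine Finset.sum_le_sum fun av _ => Finset.sum_le_sum fun aa _ => ?_
            rw [abs_mul, abs_mul, abs_of_nonneg (hν0 (s, av)), abs_of_nonneg (hP0 s av aa t)]
    have hy : ∀ t, |(inducedMatrix P ν' (fun p q => v (p, q)) *ᵥ d) t|
        ≤ ∑ s, (∑ av, ∑ aa, ν' s av * |v (s, aa)| * P s av aa t) * d s := by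
      intro t
      rw [hmv]
      calc |∑ s, (inducedMatrix P ν' (fun p q => v (p, q))) t s * d s|
          ≤ ∑ s, |(inducedMatrix P ν' (fun p q => v (p, q))) t s * d s| :=
            Finset.abs_sum_le_sum_abs _ _
        _ ≤ ∑ s, (∑ av, ∑ aa, ν' s av * |v (s, aa)| * P s av aa t) * d s := by
            refine Finset.sum_le_sum fun s _ => ?_
            rw [abs_mul, abs_of_nonneg (hd0 s)]
            exact mul_le_mul_of_nonneg_right (hMvabs t s) (hd0 s)
    have hysum : ∑ t, |(inducedMatrix P ν' (fun p q => v (p, q)) *ᵥ d) t| ≤ X := by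
      calc ∑ t, |(inducedMatrix P ν' (fun p q => v (p, q)) *ᵥ d) t|
          ≤ ∑ t, ∑ s, (∑ av, ∑ aa, ν' s av * |v (s, aa)| * P s av aa t) * d s :=
            Finset.sum_le_sum fun t _ => hy t
        _ = ∑ s, (∑ aa, |v (s, aa)|) * d s := by
            rw [Finset.sum_comm]
            refine Finset.sum_congr rfl fun s _ => ?_
            rw [← Finset.sum_mul]
            congr 1
            calc ∑ t, ∑ av, ∑ aa, ν' s av * |v (s, aa)| * P s av aa t
                = ∑ av, ∑ t, ∑ aa, ν' s av * |v (s, aa)| * P s av aa t := Finset.sum_comm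
              _ = ∑ av, ∑ aa, ∑ t, ν' s av * |v (s, aa)| * P s av aa t :=
                  Finset.sum_congr rfl fun av _ => Finset.sum_comm
              _ = ∑ av, ∑ aa, ν' s av * |v (s, aa)| := by
                  refine Finset.sum_congr rfl fun av _ => Finset.sum_congr rfl fun aa _ => ?_
                  rw [← Finset.mul_sum, hP1, mul_one]
              _ = ∑ aa, |v (s, aa)| := hsub s
        _ = X := by
            rw [hXdef]
            exact Finset.sum_congr rfl fun s _ => by ring
    have hT1 : |∑ s, rb s * ((γ * ε) *
        (A⁻¹ *ᵥ (inducedMatrix P ν' (fun p q => v (p, q)) *ᵥ d)) s)|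
        ≤ γ * ε * ((1 - γ)⁻¹ * X) := by
      calc |∑ s, rb s * ((γ * ε) *
            (A⁻¹ *ᵥ (inducedMatrix P ν' (fun p q => v (p, q)) *ᵥ d)) s)|
          ≤ ∑ s, |rb s * ((γ * ε) *
            (A⁻¹ *ᵥ (inducedMatrix P ν' (fun p q => v (p, q)) *ᵥ d)) s)| :=
            Finset.abs_sum_le_sum_abs _ _
        _ ≤ ∑ s, (γ * ε) *
            |(A⁻¹ *ᵥ (inducedMatrix P ν' (fun p q => v (p, q)) *ᵥ d)) s| := by
            refine Finset.sum_le_sum fun s _ => ?_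
            rw [abs_mul, abs_mul, abs_of_nonneg (hrb0 s),
              abs_of_nonneg (mul_nonneg hγ0 hε0)]
            calc rb s * (γ * ε *
                  |(A⁻¹ *ᵥ (inducedMatrix P ν' (fun p q => v (p, q)) *ᵥ d)) s|)
                ≤ 1 * (γ * ε *
                  |(A⁻¹ *ᵥ (inducedMatrix P ν' (fun p q => v (p, q)) *ᵥ d)) s|) :=
                  mul_le_mul_of_nonneg_right (hrb1 s) (by positivity)
              _ = γ * ε *
                  |(A⁻¹ *ᵥ (inducedMatrix P ν' (fun p q => v (p, q)) *ᵥ d)) s| := one_mul _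
        _ = (γ * ε) * ∑ s,
            |(A⁻¹ *ᵥ (inducedMatrix P ν' (fun p q => v (p, q)) *ᵥ d)) s| :=
            (Finset.mul_sum _ _ _).symm
        _ ≤ (γ * ε) * ((1 - γ)⁻¹ * X) := by
            refine mul_le_mul_of_nonneg_left ?_ (mul_nonneg hγ0 hε0)
            calc ∑ s, |(A⁻¹ *ᵥ (inducedMatrix P ν' (fun p q => v (p, q)) *ᵥ d)) s|
                ≤ ∑ s, ∑ t, A⁻¹ s t *
                  |(inducedMatrix P ν' (fun p q => v (p, q)) *ᵥ d) t| := by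
                  refine Finset.sum_le_sum fun s _ => ?_
                  rw [hmv]
                  refine le_trans (Finset.abs_sum_le_sum_abs _ _)
                    (le_of_eq (Finset.sum_congr rfl fun t _ => ?_))
                  rw [abs_mul, abs_of_nonneg (hAinv0 s t)]
              _ = ∑ t, (1 - γ)⁻¹ *
                  |(inducedMatrix P ν' (fun p q => v (p, q)) *ᵥ d) t| := by
                  rw [Finset.sum_comm]
                  refine Finset.sum_congr rfl fun t _ => ?_
                  rw [← Finset.sum_mul, hAcolsum t]
              _ = (1 - γ)⁻¹ * ∑ t,
                  |(inducedMatrix P ν' (fun p q => v (p, q)) *ᵥ d) t| :=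
                  (Finset.mul_sum _ _ _).symm
              _ ≤ (1 - γ)⁻¹ * X := by
                  refine mul_le_mul_of_nonneg_left hysum (by positivity)
    -- Cauchy-Schwarz
    have hXle : X ≤ ‖v‖ * ((1 - γ)⁻¹ * Real.sqrt (Fintype.card Aa)) := by
      have hinner : X = ⟪(WithLp.toLp 2 (fun p => abs (v p)) : EuclideanSpace ℝ (S × Aa)),
          (WithLp.toLp 2 (fun p => d p.1) : EuclideanSpace ℝ (S × Aa))⟫ := by
        rw [PiLp.inner_apply, hXdef]
        rw [Fintype.sum_prod_type]
        refine Finset.sum_congr rfl fun s _ => ?_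
        rw [Finset.mul_sum]
        refine Finset.sum_congr rfl fun aa _ => ?_
        simp [RCLike.inner_apply]
      have h1 : ‖(WithLp.toLp 2 (fun p => abs (v p)) : EuclideanSpace ℝ (S × Aa))‖ = ‖v‖ := by
        rw [EuclideanSpace.norm_eq, EuclideanSpace.norm_eq]
        congr 1
        refine Finset.sum_congr rfl fun p _ => ?_
        rw [Real.norm_eq_abs, Real.norm_eq_abs, abs_abs]
      have h2 : ‖(WithLp.toLp 2 (fun p => d p.1) : EuclideanSpace ℝ (S × Aa))‖
          ≤ (1 - γ)⁻¹ * Real.sqrt (Fintype.card Aa) := by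
        rw [EuclideanSpace.norm_eq]
        have hcard : ∑ p : S × Aa, ‖d p.1‖ ^ 2 = (Fintype.card Aa : ℝ) * ∑ s, d s ^ 2 := by
          rw [Fintype.sum_prod_type]
          simp [Finset.sum_const, Finset.card_univ, Finset.mul_sum, Real.norm_eq_abs, sq_abs]
        rw [hcard]
        have hsq : ∑ s, d s ^ 2 ≤ ((1 - γ)⁻¹) ^ 2 := by
          calc ∑ s, d s ^ 2 ≤ (∑ s, d s) ^ 2 :=
                Finset.sum_sq_le_sq_sum_of_nonneg fun s _ => hd0 s
            _ = ((1 - γ)⁻¹) ^ 2 := by rw [hdsum]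
        calc Real.sqrt ((Fintype.card Aa : ℝ) * ∑ s, d s ^ 2)
            ≤ Real.sqrt ((Fintype.card Aa : ℝ) * ((1 - γ)⁻¹) ^ 2) :=
              Real.sqrt_le_sqrt (mul_le_mul_of_nonneg_left hsq (Nat.cast_nonneg _))
          _ = (1 - γ)⁻¹ * Real.sqrt (Fintype.card Aa) := by
              rw [mul_comm, Real.sqrt_mul (by positivity), Real.sqrt_sq (by positivity)]
      calc X ≤ ‖(WithLp.toLp 2 (fun p => abs (v p)) : EuclideanSpace ℝ (S × Aa))‖ *
            ‖(WithLp.toLp 2 (fun p => d p.1) : EuclideanSpace ℝ (S × Aa))‖ := by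
            rw [hinner]; exact real_inner_le_norm _ _
        _ ≤ ‖v‖ * ((1 - γ)⁻¹ * Real.sqrt (Fintype.card Aa)) := by
            rw [h1]
            exact mul_le_mul_of_nonneg_left h2 (norm_nonneg v)
    rw [hLv, Real.norm_eq_abs]
    calc |(∑ s, d s * (ε * ∑ av, ∑ aa, ν' s av * v (s, aa) * r s av aa))
          + ∑ s, rb s * ((γ * ε) *
            (A⁻¹ *ᵥ (inducedMatrix P ν' (fun p q => v (p, q)) *ᵥ d)) s)|
        ≤ |∑ s, d s * (ε * ∑ av, ∑ aa, ν' s av * v (s, aa) * r s av aa)|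
          + |∑ s, rb s * ((γ * ε) *
            (A⁻¹ *ᵥ (inducedMatrix P ν' (fun p q => v (p, q)) *ᵥ d)) s)| := abs_add_le _ _
      _ ≤ ε * X + γ * ε * ((1 - γ)⁻¹ * X) := add_le_add hT2 hT1
      _ = ε * (1 - γ)⁻¹ * X := by field_simp; ring
      _ ≤ ε * (1 - γ)⁻¹ * (‖v‖ * ((1 - γ)⁻¹ * Real.sqrt (Fintype.card Aa))) :=
          mul_le_mul_of_nonneg_left hXle (by positivity)
      _ = ε * Real.sqrt (Fintype.card Aa) / (1 - γ) ^ 2 * ‖v‖ := by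
          field_simp


end Main
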